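/- Let f have L-Lipschitz gradient over a compact convex set D of diameter M, let x ∈ D, let h := f(x) − min_{y∈D} f(y), and let g := max_{s∈D} ⟨−∇f(x), s − x⟩ be the Frank-Wolfe gap at x. Then g ≤ h + L·M²/2 if h > L·M²/2, and g ≤ M·√(2·h·L) otherwise. -/

import Mathlib

open scoped InnerProductSpace

lemma descent {d : ℕ} (f : EuclideanSpace ℝ (Fin d) → ℝ)
    (f' : EuclideanSpace ℝ (Fin d) → EuclideanSpace ℝ (Fin d))
    (D : Set (EuclideanSpace ℝ (Fin d))) (L : ℝ)
    (hD : Convex ℝ D)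
    (hdiff : ∀ y ∈ D, HasGradientAt f (f' y) y)
    (hlip : ∀ a ∈ D, ∀ b ∈ D, ‖f' a - f' b‖ ≤ L * ‖a - b‖)
    (x y : EuclideanSpace ℝ (Fin d)) (hx : x ∈ D) (hy : y ∈ D) :
    f y ≤ f x + ⟪f' x, y - x⟫_ℝ + L / 2 * ‖y - x‖ ^ 2 := by
  set v := y - x with hv
  have hmem : ∀ t ∈ Set.Icc (0:ℝ) 1, x + t • v ∈ D := by
    intro t ht
    have : x + t • v = (1 - t) • x + t • y := by
      rw [hv]; module
    rw [this]
    exact hD hx hy (by linarith [ht.2]) ht.1 (by ring)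
  set φ : ℝ → ℝ := fun t => f (x + t • v) - t * ⟪f' x, v⟫_ℝ - L / 2 * t ^ 2 * ‖v‖ ^ 2 with hφ
  have hderiv : ∀ t ∈ Set.Icc (0:ℝ) 1,
      HasDerivAt φ (⟪f' (x + t • v), v⟫_ℝ - ⟪f' x, v⟫_ℝ - L * t * ‖v‖ ^ 2) t := by
    intro t ht
    have hc : HasDerivAt (fun t : ℝ => x + t • v) v t := by
      simpa using ((hasDerivAt_id t).smul_const v).const_add x
    have h1 : HasDerivAt (fun t : ℝ => f (x + t • v)) (⟪f' (x + t • v), v⟫_ℝ) t := by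
      have := ((hdiff _ (hmem t ht)).hasFDerivAt).comp_hasDerivAt t hc
      simp [InnerProductSpace.toDual_apply_apply] at this
      exact this
    have h2 : HasDerivAt (fun t : ℝ => t * ⟪f' x, v⟫_ℝ) (⟪f' x, v⟫_ℝ) t := by
      simpa using (hasDerivAt_id t).mul_const (⟪f' x, v⟫_ℝ)
    have h3 : HasDerivAt (fun t : ℝ => L / 2 * t ^ 2 * ‖v‖ ^ 2) (L * t * ‖v‖ ^ 2) t := by
      have := ((hasDerivAt_pow 2 t).const_mul (L / 2)).mul_const (‖v‖ ^ 2)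
      rw [show L * t * ‖v‖ ^ 2 = L / 2 * ((2:ℕ) * t ^ (2 - 1)) * ‖v‖ ^ 2 by push_cast; ring]
      exact this
    exact (h1.sub h2).sub h3
  have hanti : AntitoneOn φ (Set.Icc (0:ℝ) 1) := by
    apply antitoneOn_of_deriv_nonpos (convex_Icc 0 1)
    · intro t ht
      exact (hderiv t ht).continuousAt.continuousWithinAt
    · intro t ht
      rw [interior_Icc] at ht
      have ht' : t ∈ Set.Icc (0:ℝ) 1 := Set.mem_Icc.2 ⟨ht.1.le, ht.2.le⟩
      exact (hderiv t ht').differentiableAt.differentiableWithinAt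
    · intro t ht
      rw [interior_Icc] at ht
      have ht' : t ∈ Set.Icc (0:ℝ) 1 := Set.mem_Icc.2 ⟨ht.1.le, ht.2.le⟩
      rw [(hderiv t ht').deriv]
      have hcs : ⟪f' (x + t • v) - f' x, v⟫_ℝ ≤ ‖f' (x + t • v) - f' x‖ * ‖v‖ :=
        real_inner_le_norm _ _
      have hl : ‖f' (x + t • v) - f' x‖ ≤ L * ‖(x + t • v) - x‖ :=
        hlip _ (hmem t ht') _ hx
      have hn : ‖(x + t • v) - x‖ = t * ‖v‖ := by
        rw [add_sub_cancel_left, norm_smul, Real.norm_eq_abs, abs_of_nonneg ht.1.le]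
      rw [inner_sub_left] at hcs
      rw [hn] at hl
      have := mul_le_mul_of_nonneg_right hl (norm_nonneg v)
      nlinarith [norm_nonneg v]
  have := hanti (Set.left_mem_Icc.2 zero_le_one) (Set.right_mem_Icc.2 zero_le_one) zero_le_one
  simp only [hφ] at this
  simp only [zero_smul, add_zero, one_smul] at this
  have hyy : x + v = y := by rw [hv]; abel
  rw [hyy] at this
  nlinarith [this]

theorem stmt3 (d : ℕ) (f : EuclideanSpace ℝ (Fin d) → ℝ)
    (f' : EuclideanSpace ℝ (Fin d) → EuclideanSpace ℝ (Fin d))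
    (D : Set (EuclideanSpace ℝ (Fin d))) (L M h g : ℝ)
    (hD : Convex ℝ D) (hcomp : IsCompact D) (hL : 0 ≤ L)
    (hM : ∀ a ∈ D, ∀ b ∈ D, ‖a - b‖ ≤ M)
    (hdiff : ∀ y ∈ D, HasGradientAt f (f' y) y)
    (hlip : ∀ a ∈ D, ∀ b ∈ D, ‖f' a - f' b‖ ≤ L * ‖a - b‖)
    (x xstar sstar : EuclideanSpace ℝ (Fin d))
    (hx : x ∈ D) (hxs : xstar ∈ D) (hmin : ∀ y ∈ D, f xstar ≤ f y)
    (hh : h = f x - f xstar)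
    (hss : sstar ∈ D) (hgmax : ∀ s ∈ D, ⟪-f' x, s - x⟫_ℝ ≤ ⟪-f' x, sstar - x⟫_ℝ)
    (hg : g = ⟪-f' x, sstar - x⟫_ℝ) :
    (h > L * M ^ 2 / 2 → g ≤ h + L * M ^ 2 / 2) ∧
      (h ≤ L * M ^ 2 / 2 → g ≤ M * Real.sqrt (2 * h * L)) := by
  have hM0 : 0 ≤ M := le_trans (by simp) (hM x hx x hx)
  have hnorm : ‖sstar - x‖ ≤ M := hM sstar hss x hx
  have hh0 : 0 ≤ h := by rw [hh]; linarith [hmin x hx]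
  -- key inequality
  have key : ∀ γ ∈ Set.Icc (0:ℝ) 1, γ * g ≤ h + γ ^ 2 * (L * M ^ 2) / 2 := by
    intro γ hγ
    set y := x + γ • (sstar - x) with hy
    have hyD : y ∈ D := by
      have : y = (1 - γ) • x + γ • sstar := by rw [hy]; module
      rw [this]
      exact hD hx hss (by linarith [hγ.2]) hγ.1 (by ring)
    have hdes := descent f f' D L hD hdiff hlip x y hx hyD
    have hyx : y - x = γ • (sstar - x) := by rw [hy]; abel
    rw [hyx] at hdes
    have hinner : ⟪f' x, γ • (sstar - x)⟫_ℝ = γ * ⟪f' x, sstar - x⟫_ℝ :=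
      real_inner_smul_right _ _ _
    have hns : ‖γ • (sstar - x)‖ = γ * ‖sstar - x‖ := by
      rw [norm_smul, Real.norm_eq_abs, abs_of_nonneg hγ.1]
    have hge : g = -⟪f' x, sstar - x⟫_ℝ := by rw [hg, inner_neg_left]
    have hfy : f xstar ≤ f y := hmin y hyD
    rw [hinner, hns] at hdes
    have hsq : (γ * ‖sstar - x‖) ^ 2 ≤ γ ^ 2 * M ^ 2 := by
      have := norm_nonneg (sstar - x)
      nlinarith [sq_nonneg γ, mul_le_mul hnorm hnorm this hM0, hγ.1]
    nlinarith [hγ.1]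
  have hg0 : 0 ≤ g := by
    rw [hg]
    have := hgmax x hx
    simpa using this
  constructor
  · intro hcase
    have := key 1 (Set.mem_Icc.2 ⟨zero_le_one, le_refl 1⟩)
    linarith
  · intro hcase
    rcases eq_or_lt_of_le hh0 with hh0' | hh0'
    · -- h = 0 : show g ≤ 0
      have hgle : g ≤ 0 := by
        by_contra hgpos
        push_neg at hgpos
        rcases le_or_gt (L * M ^ 2) 0 with hLM | hLM
        · have := key 1 (Set.mem_Icc.2 ⟨zero_le_one, le_refl 1⟩)
          rw [← hh0'] at this
          linarith
        set γ := min 1 (g / (L * M ^ 2)) with hγdef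
        have hγ1 : γ ≤ 1 := min_le_left _ _
        have hγ0 : 0 < γ := lt_min one_pos (div_pos hgpos hLM)
        have hk := key γ (Set.mem_Icc.2 ⟨hγ0.le, hγ1⟩)
        have hγg : γ ≤ g / (L * M ^ 2) := min_le_right _ _
        rw [← hh0'] at hk
        -- γ g ≤ γ² L M²/2 ≤ γ (g/2)
        have : γ * (L * M ^ 2) ≤ g := by
          rw [← le_div_iff₀ hLM]
          exact hγg
        nlinarith
      have : 0 ≤ M * Real.sqrt (2 * h * L) :=
        mul_nonneg hM0 (Real.sqrt_nonneg _)
      linarith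
    · -- h > 0
      have hLM : 0 < L * M ^ 2 := by nlinarith
      set A := 2 * h / (L * M ^ 2) with hA
      have hA0 : 0 < A := div_pos (by linarith) hLM
      have hA1 : A ≤ 1 := by rw [hA, div_le_one hLM]; linarith
      set γ := Real.sqrt A with hγdef
      have hγ2 : γ ^ 2 = A := Real.sq_sqrt hA0.le
      have hγ0 : 0 < γ := Real.sqrt_pos.2 hA0
      have hγ1 : γ ≤ 1 := by
        rw [hγdef]
        rw [show (1:ℝ) = Real.sqrt 1 by simp]
        exact Real.sqrt_le_sqrt hA1
      have hk := key γ (Set.mem_Icc.2 ⟨hγ0.le, hγ1⟩)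
      have hA2 : A * (L * M ^ 2) = 2 * h := by
        rw [hA]; exact div_mul_cancel₀ _ hLM.ne'
      clear_value γ A
      have hk2 : γ * g ≤ 2 * h := by
        rw [hγ2] at hk; nlinarith
      have hgb : g ≤ γ * (L * M ^ 2) := by
        have h2h : γ * (γ * (L * M ^ 2)) = 2 * h := by
          rw [← hA2]; nlinarith
        rw [← h2h] at hk2
        exact le_of_mul_le_mul_left hk2 hγ0
      have h1 : (M * Real.sqrt (2 * h * L)) ^ 2 = (γ * (L * M ^ 2)) ^ 2 := by
        rw [mul_pow, mul_pow, Real.sq_sqrt (by nlinarith), hγ2]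
        linear_combination (-(L * M ^ 2)) * hA2
      have h2 : 0 ≤ M * Real.sqrt (2 * h * L) :=
        mul_nonneg hM0 (Real.sqrt_nonneg _)
      have h3 : 0 ≤ γ * (L * M ^ 2) := mul_nonneg hγ0.le hLM.le
      have heq : M * Real.sqrt (2 * h * L) = γ * (L * M ^ 2) := by
        have h4 := (sq_eq_sq_iff_abs_eq_abs _ _).mp h1
        rwa [abs_of_nonneg h2, abs_of_nonneg h3] at h4
      linarith [hgb]
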